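/- For every nonzero 3-adic integer λ and every real X ≥ 2, the number of positive integers n ≤ X for which the 3-adic expansion of λ·2^n omits the digit 2 is at most 2·X^{log 2 / log 3}. -/

import Mathlib

/-- The `j`-th digit of the 3-adic expansion of `y`. -/
noncomputable def padicDigit (y : ℤ_[3]) (j : ℕ) : ℕ := y.appr (j + 1) / 3 ^ j % 3

private lemma digit_ext : ∀ (m s t : ℕ), s < 3 ^ m → t < 3 ^ m →
    (∀ i < m, s / 3 ^ i % 3 = t / 3 ^ i % 3) → s = t := by
  intro m
  induction m with
  | zero => intro s t hs ht _; simp at hs ht; omega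
  | succ m ih =>
    intro s t hs ht h
    have h0 := h 0 (by omega)
    simp only [pow_zero, Nat.div_one] at h0
    have hdiv : s / 3 = t / 3 := by
      apply ih
      · rw [Nat.div_lt_iff_lt_mul (by norm_num)]
        calc s < 3 ^ (m + 1) := hs
        _ = 3 ^ m * 3 := by ring
      · rw [Nat.div_lt_iff_lt_mul (by norm_num)]
        calc t < 3 ^ (m + 1) := ht
        _ = 3 ^ m * 3 := by ring
      · intro i hi
        have := h (i + 1) (by omega)
        simpa [Nat.div_div_eq_div_mul, ← pow_succ'] using this
    have e1 := Nat.div_add_mod s 3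
    have e2 := Nat.div_add_mod t 3
    omega

private lemma low_digits {r v j : ℕ} (hdvd : 3 ^ v ∣ r) (hj : j < v) :
    r / 3 ^ j % 3 = 0 := by
  obtain ⟨c, rfl⟩ := hdvd
  obtain ⟨w, rfl⟩ : ∃ w, v = j + (w + 1) := ⟨v - j - 1, by omega⟩
  have : 3 ^ (j + (w + 1)) * c = 3 ^ j * (3 * (3 ^ w * c)) := by ring
  rw [this, Nat.mul_div_cancel_left _ (by positivity), Nat.mul_mod_right]

private lemma digit_v {r v : ℕ} (hdvd : 3 ^ v ∣ r) (hnd : ¬ 3 ^ (v + 1) ∣ r)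
    (hle : r / 3 ^ v % 3 ≤ 1) : r / 3 ^ v % 3 = 1 := by
  obtain ⟨c, rfl⟩ := hdvd
  rw [Nat.mul_div_cancel_left _ (by positivity)] at hle ⊢
  rcases Nat.lt_or_ge (c % 3) 1 with h | h
  · exfalso
    apply hnd
    rw [pow_succ]
    exact mul_dvd_mul_left _ (Nat.dvd_of_mod_eq_zero (by omega))
  · omega

private lemma order_lower (m d : ℕ) (hm : 1 ≤ m) (hd : 0 < d)
    (hdvd : (3:ℤ) ^ m ∣ 2 ^ d - 1) : 2 * 3 ^ (m - 1) ≤ d := by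
  have h3 : (3:ℤ) ∣ 2 ^ d - 1 := dvd_trans (dvd_pow_self 3 (by omega)) hdvd
  have heven : Even d := by
    by_contra hodd
    rw [Nat.not_even_iff_odd] at hodd
    have h0 : ((2 ^ d - 1 : ℤ) : ZMod 3) = 0 := by
      exact_mod_cast (ZMod.intCast_zmod_eq_zero_iff_dvd _ 3).mpr h3
    push_cast at h0
    have h2 : (2 : ZMod 3) = -1 := by decide
    rw [h2, hodd.neg_one_pow] at h0
    revert h0; decide
  obtain ⟨e, rfl⟩ := heven
  have he : 0 < e := by omega
  have hdvd' : (3:ℤ) ^ m ∣ 4 ^ e - 1 := by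
    have : (4:ℤ) ^ e = 2 ^ (e + e) := by rw [show (4:ℤ) = 2 ^ 2 from by norm_num, ← pow_mul]; ring_nf
    rwa [this]
  have key := Int.emultiplicity_pow_sub_pow (p := 3) (by norm_num) (by decide)
    (x := 4) (y := 1) (by norm_num) (by norm_num) e
  simp only [one_pow, Nat.cast_ofNat] at key
  have h41 : emultiplicity (3:ℤ) (4 - 1) = 1 := by
    norm_num
    exact emultiplicity_eq_of_dvd_of_not_dvd (by norm_num) (by norm_num)
  rw [h41] at key
  have hfin : FiniteMultiplicity 3 e := Nat.finiteMultiplicity_iff.mpr ⟨by norm_num, he⟩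
  rw [hfin.emultiplicity_eq_multiplicity] at key
  have hle : (m : ℕ∞) ≤ 1 + (multiplicity 3 e : ℕ∞) := key ▸ le_emultiplicity_of_pow_dvd hdvd'
  have hle' : m ≤ 1 + multiplicity 3 e := by exact_mod_cast hle
  have hdvde : 3 ^ (m - 1) ∣ e :=
    pow_dvd_of_le_emultiplicity (by
      rw [hfin.emultiplicity_eq_multiplicity]
      exact_mod_cast (by omega : m - 1 ≤ multiplicity 3 e))
  have := Nat.le_of_dvd he hdvde
  omega

private lemma appr_digit (y : ℤ_[3]) {j k : ℕ} (hjk : j < k) :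
    padicDigit y j = y.appr k / 3 ^ j % 3 := by
  have hle : j + 1 ≤ k := hjk
  obtain ⟨c, hc⟩ := PadicInt.dvd_appr_sub_appr y (j + 1) k hle
  have h2 := PadicInt.appr_mono y hle
  have h3 := PadicInt.appr_lt y (j + 1)
  have hk : y.appr k = y.appr (j + 1) + 3 ^ (j + 1) * c := by omega
  unfold padicDigit
  rw [hk, pow_succ]
  rw [show 3 ^ j * 3 * c = 3 ^ j * (3 * c) from by ring]
  rw [Nat.add_mul_div_left _ _ (by positivity), Nat.add_mul_mod_self_left]

private lemma norm_sub_le_max (a b : ℤ_[3]) : ‖a - b‖ ≤ max ‖a‖ ‖b‖ := by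
  rw [sub_eq_add_neg]
  refine le_trans (PadicInt.nonarchimedean _ _) ?_
  rw [norm_neg]

private lemma appr_norm (y : ℤ_[3]) (k : ℕ) :
    ‖y - (y.appr k : ℤ_[3])‖ ≤ (3:ℝ) ^ (-(k:ℤ)) := by
  have := (PadicInt.norm_le_pow_iff_mem_span_pow (y - (y.appr k : ℤ_[3])) k).mpr
    (PadicInt.appr_spec k y)
  exact_mod_cast this

private lemma appr_dvd_pow {y : ℤ_[3]} {v k : ℕ} (hy : ‖y‖ = (3:ℝ) ^ (-(v:ℤ)))
    (hvk : v < k) : (3:ℤ) ^ v ∣ (y.appr k : ℤ) := by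
  have hnorm : ‖(((y.appr k : ℤ)) : ℤ_[3])‖ ≤ ((3:ℕ):ℝ) ^ (-(v:ℤ)) := by
    have hcast : (((y.appr k : ℤ)) : ℤ_[3]) = y - (y - (y.appr k : ℤ_[3])) := by
      push_cast; ring
    rw [hcast]
    refine le_trans (norm_sub_le_max _ _) ?_
    have h1 : ‖y - (y.appr k : ℤ_[3])‖ ≤ (3:ℝ) ^ (-(k:ℤ)) := appr_norm y k
    have h2 : (3:ℝ) ^ (-(k:ℤ)) ≤ (3:ℝ) ^ (-(v:ℤ)) :=
      zpow_le_zpow_right₀ (by norm_num) (by omega)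
    rw [show ((3:ℕ):ℝ) = (3:ℝ) from by norm_num, hy]
    exact max_le le_rfl (le_trans h1 h2)
  have := (PadicInt.norm_int_le_pow_iff_dvd).mp hnorm
  exact_mod_cast this

private lemma appr_not_dvd_pow {y : ℤ_[3]} {v k : ℕ} (hy : ‖y‖ = (3:ℝ) ^ (-(v:ℤ)))
    (hvk : v + 1 ≤ k) : ¬ (3:ℤ) ^ (v + 1) ∣ (y.appr k : ℤ) := by
  intro hdvd
  have h1 : ‖(((y.appr k : ℤ)) : ℤ_[3])‖ ≤ ((3:ℕ):ℝ) ^ (-((v+1:ℕ)):ℤ) :=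
    (PadicInt.norm_int_le_pow_iff_dvd).mpr (by exact_mod_cast hdvd)
  have h1' : ‖((y.appr k : ℕ) : ℤ_[3])‖ ≤ (3:ℝ) ^ (-((v:ℤ)+1)) := by
    have : (((y.appr k : ℤ)) : ℤ_[3]) = ((y.appr k : ℕ) : ℤ_[3]) := by push_cast; ring
    rw [this] at h1
    convert h1 using 2 <;> push_cast <;> norm_num
  have hsplit : y = (y - (y.appr k : ℤ_[3])) + (y.appr k : ℤ_[3]) := by ring
  have h2 : ‖y‖ ≤ max ‖y - (y.appr k : ℤ_[3])‖ ‖((y.appr k : ℕ) : ℤ_[3])‖ := by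
    conv_lhs => rw [hsplit]
    exact PadicInt.nonarchimedean _ _
  have h3 : ‖y - (y.appr k : ℤ_[3])‖ ≤ (3:ℝ) ^ (-(k:ℤ)) := appr_norm y k
  have h4 : (3:ℝ) ^ (-(k:ℤ)) ≤ (3:ℝ) ^ (-((v:ℤ)+1)) :=
    zpow_le_zpow_right₀ (by norm_num) (by omega)
  have h5 : (3:ℝ) ^ (-((v:ℤ)+1)) < (3:ℝ) ^ (-(v:ℤ)) :=
    zpow_lt_zpow_right₀ (by norm_num) (by omega)
  rw [hy] at h2
  have := le_trans h2 (max_le (le_trans h3 h4) h1')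
  linarith

theorem padic_count_omit_two_le (lam : ℤ_[3]) (hlam : lam ≠ 0) (X : ℝ) (hX : 2 ≤ X) :
    ({n : ℕ | 1 ≤ n ∧ (n : ℝ) ≤ X ∧ ∀ j, padicDigit (lam * 2 ^ n) j ≠ 2}.ncard : ℝ)
      ≤ 2 * X ^ (Real.log 2 / Real.log 3) := by
  classical
  set θ := Real.log 2 / Real.log 3 with hθdef
  have hθ : 0 ≤ θ := div_nonneg (Real.log_nonneg one_le_two) (Real.log_nonneg (by norm_num))
  set A := {n : ℕ | 1 ≤ n ∧ (n : ℝ) ≤ X ∧ ∀ j, padicDigit (lam * 2 ^ n) j ≠ 2} with hA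
  set N := ⌊X⌋₊ with hNdef
  have hN2 : 2 ≤ N := Nat.le_floor (by exact_mod_cast hX)
  have hNX : (N : ℝ) ≤ X := Nat.floor_le (by linarith)
  set v := lam.valuation with hvdef
  set m := Nat.clog 3 N + 1 with hmdef
  set k := v + m with hkdef
  have hm2 : 2 ≤ m := by
    have := Nat.clog_pos (b := 3) (by norm_num) (n := N) hN2
    omega
  have hmN : N ≤ 3 ^ (m - 1) := by
    have := Nat.le_pow_clog (b := 3) (by norm_num) N
    simpa [hmdef] using this
  have h32 : 3 ^ (m - 2) < N := by
    have := Nat.pow_pred_clog_lt_self (b := 3) (by norm_num) (x := N) (by omega)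
    have hmm : m - 2 = Nat.clog 3 N - 1 := by omega
    rwa [hmm]
  -- norm facts
  have hnorm2 : ‖(2:ℤ_[3])‖ = 1 := by
    refine le_antisymm (PadicInt.norm_le_one _) ?_
    by_contra hlt
    push_neg at hlt
    have : ‖((2:ℤ):ℤ_[3])‖ < 1 := by exact_mod_cast hlt
    have := (PadicInt.norm_int_lt_one_iff_dvd 2).mp this
    norm_num at this
  have hnormy : ∀ n : ℕ, ‖lam * 2 ^ n‖ = (3:ℝ) ^ (-(v:ℤ)) := by
    intro n
    rw [norm_mul, norm_pow, hnorm2, one_pow, mul_one,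
      PadicInt.norm_eq_zpow_neg_valuation hlam]
    norm_num [hvdef]
  have hy0 : ∀ n : ℕ, lam * 2 ^ n ≠ 0 := by
    intro n h
    rcases mul_eq_zero.mp h with h | h
    · exact hlam h
    · exact pow_ne_zero n (by norm_num : (2:ℤ_[3]) ≠ 0) h
  -- injectivity key
  have key : ∀ n n' : ℕ, n' ≤ n → n ≤ N → 1 ≤ n' →
      (lam * 2 ^ n).appr k = (lam * 2 ^ n').appr k → n = n' := by
    intro n n' hle hnN hn1 heq
    by_contra hne
    have hd : 0 < n - n' := by omega
    have hfact : lam * 2 ^ n - lam * 2 ^ n' = lam * 2 ^ n' * ((2:ℤ_[3]) ^ (n - n') - 1) := by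
      have hnn : n' + (n - n') = n := by omega
      rw [mul_sub, mul_one, mul_assoc, ← pow_add, hnn]
    have hnsub : ‖lam * 2 ^ n - lam * 2 ^ n'‖ ≤ (3:ℝ) ^ (-(k:ℤ)) := by
      have h1 := appr_norm (lam * 2 ^ n) k
      have h2 := appr_norm (lam * 2 ^ n') k
      have hrw : lam * 2 ^ n - lam * 2 ^ n'
          = (lam * 2 ^ n - ((lam * 2 ^ n).appr k : ℤ_[3]))
            - (lam * 2 ^ n' - ((lam * 2 ^ n').appr k : ℤ_[3])) := by
        rw [heq]; ring
      rw [hrw]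
      exact le_trans (norm_sub_le_max _ _) (max_le h1 h2)
    rw [hfact, norm_mul, hnormy] at hnsub
    have hkm : (3:ℝ) ^ (-(k:ℤ)) = (3:ℝ) ^ (-(v:ℤ)) * (3:ℝ) ^ (-(m:ℤ)) := by
      rw [← zpow_add₀ (by norm_num : (3:ℝ) ≠ 0)]
      congr 1
      simp [hkdef]
      push_cast
      ring
    rw [hkm] at hnsub
    have hz : ‖(2:ℤ_[3]) ^ (n - n') - 1‖ ≤ (3:ℝ) ^ (-(m:ℤ)) := by
      have h3v : (0:ℝ) < (3:ℝ) ^ (-(v:ℤ)) := by positivity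
      exact le_of_mul_le_mul_left hnsub h3v
    have hzint : (((2 ^ (n - n') - 1 : ℤ)) : ℤ_[3]) = (2:ℤ_[3]) ^ (n - n') - 1 := by
      push_cast; ring
    rw [← hzint] at hz
    have hdvd : (3:ℤ) ^ m ∣ 2 ^ (n - n') - 1 := by
      have := (PadicInt.norm_int_le_pow_iff_dvd (k := (2 ^ (n - n') - 1 : ℤ)) (n := m)).mp
        (by exact_mod_cast hz)
      exact_mod_cast this
    have hord := order_lower m (n - n') (by omega) hd hdvd
    have hlt : n - n' < N := by omega
    have h3m : N ≤ 3 ^ (m - 1) := hmN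
    omega
  -- the digit function
  set F : ℕ → (Fin (m - 1) → Bool) :=
    fun n i => decide ((lam * 2 ^ n).appr k / 3 ^ (v + 1 + (i:ℕ)) % 3 = 1) with hF
  have hdigle : ∀ n ∈ A, ∀ j < k, (lam * 2 ^ n).appr k / 3 ^ j % 3 ≤ 1 := by
    intro n hn j hj
    have h1 := (appr_digit (lam * 2 ^ n) hj).symm
    have h2 := hn.2.2 j
    rw [← h1] at *
    have : padicDigit (lam * 2 ^ n) j < 3 := Nat.mod_lt _ (by norm_num)
    omega
  have hinj : Set.InjOn F A := by
    intro n hn n' hn' hFeq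
    have happr : (lam * 2 ^ n).appr k = (lam * 2 ^ n').appr k := by
      apply digit_ext k
      · exact_mod_cast PadicInt.appr_lt _ k
      · exact_mod_cast PadicInt.appr_lt _ k
      · intro j hj
        have hdvd1 : 3 ^ v ∣ (lam * 2 ^ n).appr k := by
          have := appr_dvd_pow (hnormy n) (by omega : v < k)
          exact_mod_cast this
        have hdvd2 : 3 ^ v ∣ (lam * 2 ^ n').appr k := by
          have := appr_dvd_pow (hnormy n') (by omega : v < k)
          exact_mod_cast this
        rcases Nat.lt_trichotomy j v with hjv | rfl | hjv
        · rw [low_digits hdvd1 hjv, low_digits hdvd2 hjv]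
        · have hnd1 : ¬ 3 ^ (v + 1) ∣ (lam * 2 ^ n).appr k := by
            intro h
            exact appr_not_dvd_pow (hnormy n) (by omega : v + 1 ≤ k) (by exact_mod_cast h)
          have hnd2 : ¬ 3 ^ (v + 1) ∣ (lam * 2 ^ n').appr k := by
            intro h
            exact appr_not_dvd_pow (hnormy n') (by omega : v + 1 ≤ k) (by exact_mod_cast h)
          rw [digit_v hdvd1 hnd1 (hdigle n hn v (by omega)),
            digit_v hdvd2 hnd2 (hdigle n' hn' v (by omega))]
        · have hi : j - v - 1 < m - 1 := by omega
          have := congrFun hFeq ⟨j - v - 1, hi⟩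
          simp only [hF] at this
          rw [decide_eq_decide] at this
          have hj' : v + 1 + (j - v - 1) = j := by omega
          rw [hj'] at this
          have l1 := hdigle n hn j hj
          have l2 := hdigle n' hn' j hj
          omega
    exact key n n' (le_of_not_gt fun h => by
        have := key n' n (le_of_lt h) (Nat.le_floor hn'.2.1) hn.1 happr.symm
        omega)
      (Nat.le_floor hn.2.1) hn'.1 happr
  -- counting
  have hsub : A ⊆ Set.Icc 1 N := fun n hn => ⟨hn.1, Nat.le_floor hn.2.1⟩
  have hfin : A.Finite := (Set.finite_Icc 1 N).subset hsub
  have hcard : A.ncard ≤ 2 ^ (m - 1) := by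
    rw [Set.ncard_eq_toFinset_card A hfin]
    have hle := Finset.card_le_card_of_injOn (s := hfin.toFinset) F
      (fun a _ => Finset.mem_univ (F a))
      (t := (Finset.univ : Finset (Fin (m - 1) → Bool)))
      (by rw [Set.Finite.coe_toFinset]; exact hinj)
    refine le_trans hle ?_
    rw [Finset.card_univ]
    simp
  -- real arithmetic
  have h1 : ((3:ℝ)) ^ (m - 2) ≤ X := by
    have : ((3 ^ (m - 2) : ℕ) : ℝ) ≤ (N : ℝ) := by exact_mod_cast le_of_lt h32
    push_cast at this
    linarith
  have h2 : ((3:ℝ) ^ (m - 2)) ^ θ ≤ X ^ θ := Real.rpow_le_rpow (by positivity) h1 hθ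
  have h3 : ((3:ℝ) ^ (m - 2)) ^ θ = (2:ℝ) ^ (m - 2) := by
    rw [← Real.rpow_natCast 3 (m - 2), ← Real.rpow_natCast 2 (m - 2),
      ← Real.rpow_mul (by norm_num : (0:ℝ) ≤ 3)]
    rw [Real.rpow_def_of_pos (by norm_num : (0:ℝ) < 3),
      Real.rpow_def_of_pos (by norm_num : (0:ℝ) < 2)]
    congr 1
    have hl3 : Real.log 3 ≠ 0 := ne_of_gt (Real.log_pos (by norm_num))
    rw [hθdef]
    field_simp
  calc (A.ncard : ℝ) ≤ ((2 ^ (m - 1) : ℕ) : ℝ) := by exact_mod_cast hcard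
    _ = 2 * (2:ℝ) ^ (m - 2) := by
        rw [show m - 1 = (m - 2) + 1 from by omega]
        push_cast [pow_succ]
        ring
    _ ≤ 2 * X ^ θ := by rw [← h3]; linarith
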